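/- For every natural number N ≥ 3, π²·(3 + tan²(π/N))/(24·N·tan(π/N)) > π/8. (Equivalently, T(P_N) < T(B): the unit disk is not a local minimizer of the torsion energy with boundary mean zero under Lipschitz volume-preserving perturbations.) -/

import Mathlib

open Real

lemma arctan_gt_pade (t : ℝ) (ht : 0 < t) : 3 * t / (3 + t ^ 2) < arctan t := by
  have key : StrictMonoOn (fun s : ℝ => arctan s - 3 * s / (3 + s ^ 2)) (Set.Ici 0) := by
    apply strictMonoOn_of_deriv_pos (convex_Ici 0)
    · apply ContinuousOn.sub Real.continuous_arctan.continuousOn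
      apply ContinuousOn.div (continuous_const.mul continuous_id).continuousOn
        (continuous_const.add (continuous_pow 2)).continuousOn
      intro s _
      exact (by positivity : (0:ℝ) < 3 + s ^ 2).ne'
    · intro s hs
      rw [interior_Ici] at hs
      have hd : HasDerivAt (fun s : ℝ => arctan s - 3 * s / (3 + s ^ 2))
          (1 / (1 + s ^ 2) - (3 * (3 + s ^ 2) - 3 * s * (2 * s ^ 1)) / (3 + s ^ 2) ^ 2) s := by
        apply (Real.hasDerivAt_arctan s).sub
        exact HasDerivAt.div ((hasDerivAt_id s).const_mul 3 |>.congr_deriv (by ring))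
          ((hasDerivAt_pow 2 s).const_add 3) (by positivity)
      rw [hd.deriv]
      rw [sub_pos, div_lt_div_iff₀ (by positivity) (by positivity)]
      have hs' : 0 < s := hs
      nlinarith [sq_nonneg s, pow_pos hs' 4, sq_nonneg (s ^ 2)]
  have h0 : (fun s : ℝ => arctan s - 3 * s / (3 + s ^ 2)) 0 = 0 := by
    simp [Real.arctan_zero]
  have := key (Set.self_mem_Ici) (Set.mem_Ici.mpr ht.le) ht
  rw [h0] at this
  linarith

/-- For every `N ≥ 3`, `E_N = π²(3 + tan²(π/N)) / (24 N tan(π/N)) > π/8`;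
equivalently `T(P_N) < T(B)`: the unit disk is not a local minimizer of the torsion
energy with boundary mean zero under Lipschitz volume-preserving perturbations. -/
theorem stmt_2 (N : ℕ) (hN : 3 ≤ N) :
    π ^ 2 * (3 + tan (π / N) ^ 2) / (24 * N * tan (π / N)) > π / 8 := by
  have hπ := Real.pi_pos
  have hN3 : (3 : ℝ) ≤ (N : ℝ) := by exact_mod_cast hN
  have hNpos : (0 : ℝ) < N := by linarith
  set x : ℝ := π / N with hx
  have hx0 : 0 < x := by positivity
  have hxlt : x < π / 2 := by
    rw [hx, div_lt_div_iff₀ hNpos (by norm_num)]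
    nlinarith
  have ht0 : 0 < tan x := Real.tan_pos_of_pos_of_lt_pi_div_two hx0 hxlt
  set t : ℝ := tan x with hts
  have harctan : arctan t = x := Real.arctan_tan (by linarith) hxlt
  have hkey : 3 * t / (3 + t ^ 2) < x := harctan ▸ arctan_gt_pade t ht0
  have hkey' : 3 * t < x * (3 + t ^ 2) := by
    rw [div_lt_iff₀ (by positivity)] at hkey
    linarith [hkey]
  have hNx : (N : ℝ) * x = π := by
    rw [hx]; field_simp
  rw [gt_iff_lt, div_lt_div_iff₀ (by norm_num) (by positivity)]
  calc π * (24 * (N : ℝ) * t) = (8 * π * N) * (3 * t) := by ring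
    _ < (8 * π * N) * (x * (3 + t ^ 2)) :=
        mul_lt_mul_of_pos_left hkey' (by positivity)
    _ = 8 * π * ((N : ℝ) * x) * (3 + t ^ 2) := by ring
    _ = π ^ 2 * (3 + t ^ 2) * 8 := by rw [hNx]; ring
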